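/- Let T be a Markov operator on L¹([0,1], λ) and let S₁, S₂, R₁, R₂ be Borel subsets of [0,1] with T𝟙_{S₁} = 𝟙_{R₁} a.e. and T𝟙_{S₂} = 𝟙_{R₂} a.e. Then T𝟙_{S₁ ∩ S₂} = 𝟙_{R₁ ∩ R₂} a.e. -/
import Mathlib


open MeasureTheory Set unitInterval

noncomputable section

open Classical in
/-- The indicator function `𝟙_S` of a set `S ⊆ [0,1]`, as an element of `L¹([0,1], λ)`
(where `λ` is Lebesgue measure on the unit interval `I = [0,1]`).
If `S` is not measurable we default to `0`. -/
def ind (S : Set I) : Lp ℝ 1 (volume : Measure I) :=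
  if hS : MeasurableSet S then indicatorConstLp 1 hS (measure_ne_top _ _) (1:ℝ) else 0

/-- A Markov operator on `L¹([0,1], λ)`: a bounded linear operator `T` with
(i) `T𝟙 = 𝟙`, (ii) `∫ Tψ = ∫ ψ` for all `ψ ∈ L¹`, (iii) `Tψ ≥ 0` a.e. whenever `ψ ≥ 0` a.e. -/
structure IsMarkovOperator
    (T : Lp ℝ 1 (volume : Measure I) →L[ℝ] Lp ℝ 1 (volume : Measure I)) : Prop where
  map_one : T (ind univ) = ind univ
  integral_map : ∀ ψ : Lp ℝ 1 (volume : Measure I), ∫ x, (T ψ) x = ∫ x, ψ x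
  positive : ∀ ψ : Lp ℝ 1 (volume : Measure I), 0 ≤ᵐ[volume] ⇑ψ → 0 ≤ᵐ[volume] ⇑(T ψ)

/-- If `T` is a Markov operator on `L¹([0,1], λ)` and `S₁, S₂, R₁, R₂` are
Borel subsets of `[0,1]` with `T𝟙_{S₁} = 𝟙_{R₁}` a.e. and `T𝟙_{S₂} = 𝟙_{R₂}` a.e., then
`T𝟙_{S₁ ∩ S₂} = 𝟙_{R₁ ∩ R₂}` a.e. -/
lemma ind_coe {S : Set I} (hS : MeasurableSet S) :
    ⇑(ind S) =ᵐ[volume] S.indicator (fun _ => (1:ℝ)) := by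
  simp only [ind, dif_pos hS]
  exact indicatorConstLp_coeFn

theorem stmt1
    (T : Lp ℝ 1 (volume : Measure I) →L[ℝ] Lp ℝ 1 (volume : Measure I))
    (hT : IsMarkovOperator T) (S₁ S₂ R₁ R₂ : Set I)
    (hS₁ : MeasurableSet S₁) (hS₂ : MeasurableSet S₂)
    (hR₁ : MeasurableSet R₁) (hR₂ : MeasurableSet R₂)
    (h₁ : T (ind S₁) = ind R₁) (h₂ : T (ind S₂) = ind R₂) :
    T (ind (S₁ ∩ S₂)) = ind (R₁ ∩ R₂) := by
  have h12 := hS₁.inter hS₂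
  set f := T (ind (S₁ ∩ S₂)) with hf
  -- 0 ≤ f a.e.
  have h0 : 0 ≤ᵐ[volume] ⇑f := by
    apply hT.positive
    filter_upwards [ind_coe h12] with x hx
    rw [hx]
    exact Set.indicator_nonneg (fun _ _ => zero_le_one) x
  -- f ≤ 𝟙_{Rᵢ} a.e.
  have key : ∀ (S R : Set I), MeasurableSet S → MeasurableSet R → S₁ ∩ S₂ ⊆ S →
      T (ind S) = ind R →
      ∀ᵐ x ∂(volume : Measure I), f x ≤ R.indicator (fun _ => (1:ℝ)) x := by
    intro S R hS hR hsub hTR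
    have hpos : 0 ≤ᵐ[volume] ⇑(T (ind S - ind (S₁ ∩ S₂))) := by
      apply hT.positive
      filter_upwards [Lp.coeFn_sub (ind S) (ind (S₁ ∩ S₂)), ind_coe hS, ind_coe h12]
        with x hx h1 h2
      rw [hx]
      simp only [Pi.sub_apply, h1, h2, Pi.zero_apply, sub_nonneg]
      exact Set.indicator_le_indicator_of_subset hsub (fun _ => zero_le_one) x
    rw [map_sub, hTR] at hpos
    filter_upwards [hpos, Lp.coeFn_sub (ind R) f, ind_coe hR] with x hx hsub' hr
    rw [hsub'] at hx
    simp only [Pi.sub_apply, Pi.zero_apply, sub_nonneg, hr] at hx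
    exact hx
  have k1 := key S₁ R₁ hS₁ hR₁ inter_subset_left h₁
  have k2 := key S₂ R₂ hS₂ hR₂ inter_subset_right h₂
  -- lower bound: f ≥ 𝟙_{R₁} + 𝟙_{R₂} - 1 a.e.
  have hlow : ∀ᵐ x ∂(volume : Measure I),
      R₁.indicator (fun _ => (1:ℝ)) x + R₂.indicator (fun _ => (1:ℝ)) x - 1 ≤ f x := by
    have hpos : 0 ≤ᵐ[volume] ⇑(T (ind univ - ind S₁ - ind S₂ + ind (S₁ ∩ S₂))) := by
      apply hT.positive
      filter_upwards [Lp.coeFn_add (ind univ - ind S₁ - ind S₂) (ind (S₁ ∩ S₂)),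
        Lp.coeFn_sub (ind univ - ind S₁) (ind S₂), Lp.coeFn_sub (ind univ) (ind S₁),
        ind_coe MeasurableSet.univ, ind_coe hS₁, ind_coe hS₂, ind_coe h12]
        with x ha hb hc hu h1 h2 h12'
      rw [ha]
      simp only [Pi.add_apply, hb, Pi.sub_apply, hc, hu, h1, h2, h12', Pi.zero_apply]
      by_cases m1 : x ∈ S₁ <;> by_cases m2 : x ∈ S₂ <;>
        simp [Set.indicator, m1, m2]
    rw [map_add, map_sub, map_sub, hT.map_one, h₁, h₂, ← hf] at hpos
    filter_upwards [hpos, Lp.coeFn_add (ind univ - ind R₁ - ind R₂) f,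
      Lp.coeFn_sub (ind univ - ind R₁) (ind R₂), Lp.coeFn_sub (ind univ) (ind R₁),
      ind_coe MeasurableSet.univ, ind_coe hR₁, ind_coe hR₂] with x hx ha hb hc hu h1 h2
    rw [ha] at hx
    simp only [Pi.add_apply, hb, Pi.sub_apply, hc, hu, h1, h2, Pi.zero_apply,
      Set.indicator_univ] at hx
    linarith
  -- conclude
  have : ⇑f =ᵐ[volume] ⇑(ind (R₁ ∩ R₂)) := by
    filter_upwards [h0, k1, k2, hlow, ind_coe (hR₁.inter hR₂)] with x hx0 hx1 hx2 hxl hxr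
    rw [hxr]
    simp only [Pi.zero_apply] at hx0
    by_cases m1 : x ∈ R₁ <;> by_cases m2 : x ∈ R₂ <;>
      simp only [Set.indicator, m1, m2, mem_inter_iff, if_true, if_false, and_true,
        and_false, true_and, false_and, if_neg, not_false_iff] at hx1 hx2 hxl ⊢ <;>
      linarith
  exact Lp.ext this
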